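/- For any real θ and natural numbers n, k with 1 ≤ 2k+1 < 2n+1, the sum (1/(2n+1)) ∑_{ℓ=0}^{2n} (cos((θ+2πℓ)/(2n+1)))^{2k+1} equals 0. -/

import Mathlib

open Real Finset

lemma geom_aux (N : ℕ) (m : ℤ) (hm : ¬ (N:ℤ) ∣ m) :
    ∑ ℓ ∈ Finset.range N, Complex.exp (2 * Real.pi * Complex.I * m / N) ^ ℓ = 0 := by
  rcases Nat.eq_zero_or_pos N with hN | hN
  · subst hN; simp
  have hNC : (N:ℂ) ≠ 0 := Nat.cast_ne_zero.mpr hN.ne'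
  have h1 : Complex.exp (2 * Real.pi * Complex.I * m / N) ≠ 1 := by
    intro h1'
    rw [Complex.exp_eq_one_iff] at h1'
    obtain ⟨t, ht⟩ := h1'
    apply hm
    have hpi : (Real.pi : ℂ) ≠ 0 := by
      exact_mod_cast Real.pi_ne_zero
    have h2 : (2:ℂ) * Real.pi * Complex.I ≠ 0 := by
      simp [Complex.I_ne_zero, hpi]
    have hmc : (m:ℂ) = t * N := by
      field_simp at ht
      linear_combination ht
    refine ⟨t, ?_⟩
    have h3 : m = t * (N:ℤ) := by exact_mod_cast hmc
    rw [h3]; ring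
  rw [geom_sum_eq h1]
  have hpow : Complex.exp (2 * Real.pi * Complex.I * m / N) ^ N = 1 := by
    rw [← Complex.exp_nat_mul]
    have : (N:ℂ) * (2 * Real.pi * Complex.I * m / N) = m * (2 * Real.pi * Complex.I) := by
      field_simp
    rw [this, Complex.exp_int_mul_two_pi_mul_I]
  rw [hpow]
  simp

lemma exp_term (θ : ℝ) (N : ℕ) (hN : (N:ℂ) ≠ 0) (m : ℤ) (ℓ : ℕ) :
    Complex.exp ((m:ℂ) * (((θ:ℂ) + 2 * Real.pi * ℓ) / N) * Complex.I)
      = Complex.exp ((m:ℂ) * θ * Complex.I / N) *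
        Complex.exp (2 * Real.pi * Complex.I * m / N) ^ ℓ := by
  rw [← Complex.exp_nat_mul, ← Complex.exp_add]
  congr 1
  field_simp

theorem stmt_7 (θ : ℝ) (n k : ℕ) (hk : k < n) :
    (1 / (2 * n + 1 : ℝ)) * ∑ ℓ ∈ Finset.range (2 * n + 1),
        (Real.cos ((θ + 2 * Real.pi * ℓ) / (2 * n + 1))) ^ (2 * k + 1) = 0 := by
  set N : ℕ := 2 * n + 1 with hNdef
  set M : ℕ := 2 * k + 1 with hMdef
  have hNC : (N:ℂ) ≠ 0 := Nat.cast_ne_zero.mpr (by omega)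
  have hC : (∑ ℓ ∈ Finset.range N,
      (Complex.cos (((θ:ℂ) + 2 * Real.pi * ℓ) / N)) ^ M) = 0 := by
    have key : ∀ ℓ : ℕ, (Complex.cos (((θ:ℂ) + 2 * Real.pi * ℓ) / N)) ^ M
        = ∑ j ∈ Finset.range (M + 1),
            ((M.choose j : ℂ) / 2 ^ M) *
              (Complex.exp ((((2*j:ℤ) - M : ℤ):ℂ) * θ * Complex.I / N) *
                Complex.exp (2 * Real.pi * Complex.I * ((2*j:ℤ) - M : ℤ) / N) ^ ℓ) := by
      intro ℓ
      set z : ℂ := ((θ:ℂ) + 2 * Real.pi * ℓ) / N with hz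
      have hcos : Complex.cos z = (Complex.exp (z * Complex.I) + Complex.exp (-z * Complex.I)) / 2 := by
        rw [Complex.cos]
      rw [hcos, div_pow, add_pow]
      rw [Finset.sum_div]
      refine Finset.sum_congr rfl ?_
      intro j hj
      have hjM : j ≤ M := by
        simp [Finset.mem_range] at hj; omega
      have hterm : Complex.exp (z * Complex.I) ^ j * Complex.exp (-z * Complex.I) ^ (M - j)
          = Complex.exp ((((2*j:ℤ) - M : ℤ):ℂ) * z * Complex.I) := by
        rw [← Complex.exp_nat_mul, ← Complex.exp_nat_mul, ← Complex.exp_add]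
        congr 1
        have : ((M - j : ℕ) : ℂ) = (M : ℂ) - j := by
          push_cast [Nat.cast_sub hjM]; ring
        rw [this]
        push_cast
        ring
      rw [hterm]
      rw [← exp_term θ N hNC ((2*j:ℤ) - M) ℓ]
      ring
    rw [Finset.sum_congr rfl (fun ℓ _ => key ℓ)]
    rw [Finset.sum_comm]
    refine Finset.sum_eq_zero ?_
    intro j hj
    rw [← Finset.mul_sum, ← Finset.mul_sum]
    have hdvd : ¬ (N:ℤ) ∣ ((2*j:ℤ) - M) := by
      intro hd
      have hjM : j ≤ M := by simp [Finset.mem_range] at hj; omega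
      have habs : |((2*j:ℤ) - M)| < (N:ℤ) := by
        rw [abs_lt]
        constructor <;> [skip; skip] <;> push_cast <;> omega
      have := Int.eq_zero_of_abs_lt_dvd hd habs
      omega
    rw [geom_aux N _ hdvd]
    ring
  have hreal : (∑ ℓ ∈ Finset.range N,
      (Real.cos ((θ + 2 * Real.pi * ℓ) / N)) ^ M) = 0 := by
    have : ((∑ ℓ ∈ Finset.range N,
        (Real.cos ((θ + 2 * Real.pi * ℓ) / N)) ^ M : ℝ) : ℂ) = 0 := by
      push_cast [Complex.ofReal_cos]
      convert hC using 2 with ℓ _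
    exact_mod_cast this
  push_cast at hreal ⊢
  rw [show ((N:ℕ):ℝ) = 2*(n:ℝ)+1 by simp [hNdef]] at hreal
  rw [hreal]
  ring
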